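/- Let n ≥ 1, let L₂, …, Lₙ be Kripke complete monomodal logics, and let L = T × L₂ × … × Lₙ. Fix an n-modal formula φ whose variables are among p₁, …, p_m and let A and σ be the formula and translation defined from φ. Then φ ∈ L if and only if A → σ(φ) ∈ L. (Lemma 3.1) -/

import Mathlib

namespace ModalProducts

/-- `N`-modal formulas over propositional variables indexed by `ℕ`
(the variable `pₖ` is `var k`; the extra variable `p` is `var 0`). -/
inductive MF (N : ℕ) : Type
  | var : ℕ → MF N
  | bot : MF N
  | and : MF N → MF N → MF N
  | or  : MF N → MF N → MF N
  | imp : MF N → MF N → MF N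
  | box : Fin N → MF N → MF N
deriving DecidableEq

namespace MF

variable {N : ℕ}

/-- negation: `¬ψ = ψ → ⊥`. -/
def neg (φ : MF N) : MF N := imp φ bot

/-- diamond: `◇ᵢψ = ¬□ᵢ¬ψ`. -/
def dia (i : Fin N) (φ : MF N) : MF N := neg (box i (neg φ))

/-- modal depth. -/
def md : MF N → ℕ
  | var _ => 0
  | bot => 0
  | and φ ψ => max (md φ) (md ψ)
  | or φ ψ => max (md φ) (md ψ)
  | imp φ ψ => max (md φ) (md ψ)
  | box _ φ => md φ + 1

/-- length (number of symbols; the variable `pₖ` counts as `k+1` symbols,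
accounting for the subscript). -/
def len : MF N → ℕ
  | var q => q + 1
  | bot => 1
  | and φ ψ => len φ + len ψ + 1
  | or φ ψ => len φ + len ψ + 1
  | imp φ ψ => len φ + len ψ + 1
  | box _ φ => len φ + 1

/-- the set of propositional variables occurring in a formula. -/
def vars : MF N → Set ℕ
  | var q => {q}
  | bot => ∅
  | and φ ψ => vars φ ∪ vars ψ
  | or φ ψ => vars φ ∪ vars ψ
  | imp φ ψ => vars φ ∪ vars ψ
  | box _ φ => vars φ

/-- the largest index of a variable occurring in a formula (0 if none). -/
def maxVar : MF N → ℕ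
  | var q => q
  | bot => 0
  | and φ ψ => max (maxVar φ) (maxVar ψ)
  | or φ ψ => max (maxVar φ) (maxVar ψ)
  | imp φ ψ => max (maxVar φ) (maxVar ψ)
  | box _ φ => maxVar φ

/-- the list of subformulas of a formula. -/
def subfs : MF N → List (MF N)
  | var q => [var q]
  | bot => [bot]
  | and φ ψ => and φ ψ :: (subfs φ ++ subfs ψ)
  | or φ ψ => or φ ψ :: (subfs φ ++ subfs ψ)
  | imp φ ψ => imp φ ψ :: (subfs φ ++ subfs ψ)
  | box i φ => box i φ :: subfs φ

/-- uniform substitution of formulas for variables. -/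
def subst (s : ℕ → MF N) : MF N → MF N
  | var q => s q
  | bot => bot
  | and φ ψ => and (subst s φ) (subst s ψ)
  | or φ ψ => or (subst s φ) (subst s ψ)
  | imp φ ψ => imp (subst s φ) (subst s ψ)
  | box i φ => box i (subst s φ)

end MF

/-- `θ` is a subformula of `φ`. -/
def Subformula {N : ℕ} (θ φ : MF N) : Prop := θ ∈ φ.subfs

/-- A Kripke `N`-frame: a nonempty set of points with `N` accessibility relations. -/
structure Frame (N : ℕ) where
  W : Type
  nonempty : Nonempty W
  R : Fin N → W → W → Prop

/-- Truth of a formula at a point of a frame under a valuation. -/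
def Sat {N : ℕ} (F : Frame N) (v : ℕ → Set F.W) : F.W → MF N → Prop
  | x, .var q => x ∈ v q
  | _, .bot => False
  | x, .and φ ψ => Sat F v x φ ∧ Sat F v x ψ
  | x, .or φ ψ => Sat F v x φ ∨ Sat F v x ψ
  | x, .imp φ ψ => Sat F v x φ → Sat F v x ψ
  | x, .box i φ => ∀ y, F.R i x y → Sat F v y φ

/-- Validity of a formula in a frame: truth at every point under every valuation. -/
def Valid {N : ℕ} (F : Frame N) (φ : MF N) : Prop := ∀ (v : ℕ → Set F.W) (x : F.W), Sat F v x φ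

/-- A set of formulas is valid in a frame if all of its members are. -/
def ValidSet {N : ℕ} (F : Frame N) (L : Set (MF N)) : Prop := ∀ φ ∈ L, Valid F φ

/-- The logic of a class of frames. -/
def Logic {N : ℕ} (C : Set (Frame N)) : Set (MF N) := {φ | ∀ F ∈ C, Valid F φ}

/-- A logic is Kripke complete if it is the logic of some nonempty class of frames. -/
def KripkeComplete {N : ℕ} (L : Set (MF N)) : Prop :=
  ∃ C : Set (Frame N), C.Nonempty ∧ L = Logic C

/-- The product of `N` 1-frames. -/
def prodFrame {N : ℕ} (Fs : Fin N → Frame 1) : Frame N where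
  W := ∀ i, (Fs i).W
  nonempty := ⟨fun i => (Fs i).nonempty.some⟩
  R := fun i x y => (Fs i).R 0 (x i) (y i) ∧ ∀ k, k ≠ i → x k = y k

/-- The product of `N` Kripke complete monomodal logics: the logic of the class of
products of frames of the factors. -/
def productLogic {N : ℕ} (Ls : Fin N → Set (MF 1)) : Set (MF N) :=
  Logic {F | ∃ Fs : Fin N → Frame 1, (∀ i, ValidSet (Fs i) (Ls i)) ∧ F = prodFrame Fs}

/-- A 1-frame is reflexive. -/
def ReflexiveFrame (F : Frame 1) : Prop := ∀ x, F.R 0 x x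

/-- The logic `T` of all reflexive 1-frames. -/
def logicT : Set (MF 1) := Logic {F | ReflexiveFrame F}

/-- The logic `K` of all 1-frames. -/
def logicK : Set (MF 1) := Logic Set.univ

/-- The logic `S5` of all 1-frames whose relation is an equivalence. -/
def logicS5 : Set (MF 1) := Logic {F | Equivalence (F.R 0)}

section Translation

variable {n : ℕ}

/-- the variable `p`. -/
def pv : MF (n+1) := .var 0

/-- `◆₁ψ = ◇₁(¬p ∧ ◇₁(p ∧ ψ))`. -/
def blackDia (ψ : MF (n+1)) : MF (n+1) :=
  MF.dia 0 (.and (MF.neg pv) (MF.dia 0 (.and pv ψ)))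

/-- `α_k = ◆₁ᵏ □₁ p`. -/
def alphaF (k : ℕ) : MF (n+1) := blackDia^[k] (.box 0 pv)

/-- `β_k = ¬p ∧ ◇₁(p ∧ α_k)`. -/
def betaF (k : ℕ) : MF (n+1) := .and (MF.neg pv) (MF.dia 0 (.and pv (alphaF k)))

/-- `B = β_{m+1}`. -/
def Bf (m : ℕ) : MF (n+1) := betaF (m+1)

/-- The translation `σ`: `σ(p_k) = β_k`, `σ(⊥) = ⊥`, `σ` commutes with `∧, ∨, →`,
and `σ(□ᵢψ) = □ᵢ(B → σ(ψ))`. -/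
def sigmaT (m : ℕ) : MF (n+1) → MF (n+1)
  | .var k => betaF k
  | .bot => .bot
  | .and φ ψ => .and (sigmaT m φ) (sigmaT m ψ)
  | .or φ ψ => .or (sigmaT m φ) (sigmaT m ψ)
  | .imp φ ψ => .imp (sigmaT m φ) (sigmaT m ψ)
  | .box i φ => .box i (.imp (Bf m) (sigmaT m φ))

/-- conjunction of a head formula with a list of formulas. -/
def bigAnd (ψ : MF (n+1)) (l : List (MF (n+1))) : MF (n+1) := l.foldl .and ψ

/-- `□^{≤k}`: `□^{≤0}ψ = ψ`, `□^{≤k+1}ψ = □^{≤k}ψ ∧ □₁□^{≤k}ψ ∧ … ∧ □ₙ□^{≤k}ψ`. -/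
def boxLe : ℕ → MF (n+1) → MF (n+1)
  | 0, ψ => ψ
  | k+1, ψ => bigAnd (boxLe k ψ) (List.ofFn fun i : Fin (n+1) => .box i (boxLe k ψ))

/-- `□₋₁^{≤k}`: like `□^{≤k}` but using only `□₂, …, □ₙ`. -/
def boxLeTail : ℕ → MF (n+1) → MF (n+1)
  | 0, ψ => ψ
  | k+1, ψ => bigAnd (boxLeTail k ψ) (List.ofFn fun i : Fin n => .box i.succ (boxLeTail k ψ))

/-- `◇₋₁^{≤k}ψ = ¬□₋₁^{≤k}¬ψ`. -/
def diaLeTail (k : ℕ) (ψ : MF (n+1)) : MF (n+1) := MF.neg (boxLeTail k (MF.neg ψ))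

/-- `A = B ∧ □^{≤md φ}(B → □₋₁^{≤md φ}B) ∧ □^{≤md φ}(◇₋₁^{≤md φ}B → B)`. -/
def Af (m : ℕ) (φ : MF (n+1)) : MF (n+1) :=
  .and (Bf m)
    (.and (boxLe φ.md (.imp (Bf m) (boxLeTail φ.md (Bf m))))
          (boxLe φ.md (.imp (diaLeTail φ.md (Bf m)) (Bf m))))

end Translation

section Aux

variable {N : ℕ}

@[simp] lemma sat_var {F : Frame N} {v : ℕ → Set F.W} {x : F.W} {q : ℕ} :
    Sat F v x (.var q) ↔ x ∈ v q := Iff.rfl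

@[simp] lemma sat_bot {F : Frame N} {v : ℕ → Set F.W} {x : F.W} :
    ¬ Sat F v x .bot := fun h => h

@[simp] lemma sat_and {F : Frame N} {v : ℕ → Set F.W} {x : F.W} {a b : MF N} :
    Sat F v x (.and a b) ↔ Sat F v x a ∧ Sat F v x b := Iff.rfl

@[simp] lemma sat_or {F : Frame N} {v : ℕ → Set F.W} {x : F.W} {a b : MF N} :
    Sat F v x (.or a b) ↔ Sat F v x a ∨ Sat F v x b := Iff.rfl

@[simp] lemma sat_imp {F : Frame N} {v : ℕ → Set F.W} {x : F.W} {a b : MF N} :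
    Sat F v x (.imp a b) ↔ (Sat F v x a → Sat F v x b) := Iff.rfl

@[simp] lemma sat_box {F : Frame N} {v : ℕ → Set F.W} {x : F.W} {i : Fin N} {a : MF N} :
    Sat F v x (.box i a) ↔ ∀ y, F.R i x y → Sat F v y a := Iff.rfl

lemma sat_neg {F : Frame N} {v : ℕ → Set F.W} {x : F.W} {a : MF N} :
    Sat F v x (MF.neg a) ↔ ¬ Sat F v x a := Iff.rfl

lemma sat_dia {F : Frame N} {v : ℕ → Set F.W} {x : F.W} {i : Fin N} {a : MF N} :
    Sat F v x (MF.dia i a) ↔ ∃ y, F.R i x y ∧ Sat F v y a := by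
  unfold MF.dia
  rw [sat_neg]
  simp only [sat_box, sat_neg]
  push_neg
  rfl

lemma refl_of_validT {F : Frame 1} (h : ValidSet F logicT) : ReflexiveFrame F := by
  intro x
  have hT : (MF.imp (MF.box 0 (MF.var 0)) (MF.var 0)) ∈ logicT := by
    intro G hG v y hb
    exact hb y (hG y)
  exact h _ hT (fun _ => {y | F.R 0 x y}) x (fun y hy => hy)

lemma validT_of_refl {F : Frame 1} (h : ReflexiveFrame F) : ValidSet F logicT :=
  fun ψ hψ => hψ F h

lemma sat_bigAnd {n : ℕ} {F : Frame (n+1)} {v : ℕ → Set F.W} {x : F.W}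
    (ψ : MF (n+1)) (l : List (MF (n+1))) :
    Sat F v x (bigAnd ψ l) ↔ Sat F v x ψ ∧ ∀ χ ∈ l, Sat F v x χ := by
  induction l generalizing ψ with
  | nil => simp [bigAnd]
  | cons a l ih =>
    rw [show bigAnd ψ (a :: l) = bigAnd (ψ.and a) l from rfl, ih]
    simp only [sat_and, List.mem_cons]
    constructor
    · rintro ⟨⟨h1, h2⟩, h3⟩
      exact ⟨h1, fun χ hχ => hχ.elim (fun e => e ▸ h2) (h3 χ)⟩
    · rintro ⟨h1, h2⟩
      exact ⟨⟨h1, h2 a (Or.inl rfl)⟩, fun χ hχ => h2 χ (Or.inr hχ)⟩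

/-- reachability in at most `k` steps. -/
def reachLe (F : Frame N) : ℕ → F.W → F.W → Prop
  | 0 => Eq
  | k+1 => fun x y => reachLe F k x y ∨ ∃ i z, F.R i x z ∧ reachLe F k z y

/-- reachability in at most `k` steps along the relations `R₂, …, Rₙ`. -/
def tailReachLe {n : ℕ} (F : Frame (n+1)) : ℕ → F.W → F.W → Prop
  | 0 => Eq
  | k+1 => fun x y => tailReachLe F k x y ∨
      ∃ i : Fin n, ∃ z, F.R i.succ x z ∧ tailReachLe F k z y

lemma reachLe_refl {F : Frame N} (k : ℕ) (x : F.W) : reachLe F k x x := by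
  induction k with
  | zero => rfl
  | succ k ih => exact Or.inl ih

lemma reachLe_succ {F : Frame N} {k : ℕ} {x y : F.W} (h : reachLe F k x y) :
    reachLe F (k+1) x y := Or.inl h

lemma reachLe_mono {F : Frame N} {k k' : ℕ} (hk : k ≤ k') {x y : F.W}
    (h : reachLe F k x y) : reachLe F k' x y := by
  induction k' with
  | zero => exact Nat.le_zero.1 hk ▸ h
  | succ k' ih =>
    rcases Nat.lt_or_ge k (k'+1) with h' | h'
    · exact Or.inl (ih (Nat.lt_succ_iff.1 h'))
    · exact Nat.le_antisymm hk h' ▸ h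

lemma tailReachLe_refl {n : ℕ} {F : Frame (n+1)} (k : ℕ) (x : F.W) : tailReachLe F k x x := by
  induction k with
  | zero => rfl
  | succ k ih => exact Or.inl ih

lemma tailReachLe_mono {n : ℕ} {F : Frame (n+1)} {k k' : ℕ} (hk : k ≤ k') {x y : F.W}
    (h : tailReachLe F k x y) : tailReachLe F k' x y := by
  induction k' with
  | zero => exact Nat.le_zero.1 hk ▸ h
  | succ k' ih =>
    rcases Nat.lt_or_ge k (k'+1) with h' | h'
    · exact Or.inl (ih (Nat.lt_succ_iff.1 h'))
    · exact Nat.le_antisymm hk h' ▸ h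

lemma reachLe_snoc {F : Frame N} {k : ℕ} {x y z : F.W} {i : Fin N}
    (h : reachLe F k x y) (hR : F.R i y z) : reachLe F (k+1) x z := by
  induction k generalizing x with
  | zero => exact h ▸ Or.inr ⟨i, z, hR, rfl⟩
  | succ k ih =>
    rcases h with h | ⟨i', w, hR', hr⟩
    · exact Or.inl (ih h)
    · exact Or.inr ⟨i', w, hR', ih hr⟩

lemma sat_boxLe {n : ℕ} {F : Frame (n+1)} {v : ℕ → Set F.W} (k : ℕ) (ψ : MF (n+1)) (x : F.W) :
    Sat F v x (boxLe k ψ) ↔ ∀ y, reachLe F k x y → Sat F v y ψ := by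
  induction k generalizing x with
  | zero =>
    constructor
    · rintro h y rfl; exact h
    · intro h; exact h x rfl
  | succ k ih =>
    rw [show boxLe (k+1) ψ = bigAnd (boxLe k ψ) (List.ofFn fun i : Fin (n+1) =>
      .box i (boxLe k ψ)) from rfl, sat_bigAnd]
    constructor
    · rintro ⟨h1, h2⟩ y (hr | ⟨i, z, hR, hr⟩)
      · exact (ih x).1 h1 y hr
      · have := h2 _ (List.mem_ofFn.2 ⟨i, rfl⟩)
        exact (ih z).1 (this z hR) y hr
    · intro h
      refine ⟨(ih x).2 fun y hr => h y (Or.inl hr), ?_⟩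
      intro χ hχ
      rcases List.mem_ofFn.1 hχ with ⟨i, rfl⟩
      intro z hR
      exact (ih z).2 fun y hr => h y (Or.inr ⟨i, z, hR, hr⟩)

lemma sat_boxLeTail {n : ℕ} {F : Frame (n+1)} {v : ℕ → Set F.W} (k : ℕ) (ψ : MF (n+1)) (x : F.W) :
    Sat F v x (boxLeTail k ψ) ↔ ∀ y, tailReachLe F k x y → Sat F v y ψ := by
  induction k generalizing x with
  | zero =>
    constructor
    · rintro h y rfl; exact h
    · intro h; exact h x rfl
  | succ k ih =>
    rw [show boxLeTail (k+1) ψ = bigAnd (boxLeTail k ψ) (List.ofFn fun i : Fin n =>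
      .box i.succ (boxLeTail k ψ)) from rfl, sat_bigAnd]
    constructor
    · rintro ⟨h1, h2⟩ y (hr | ⟨i, z, hR, hr⟩)
      · exact (ih x).1 h1 y hr
      · have := h2 _ (List.mem_ofFn.2 ⟨i, rfl⟩)
        exact (ih z).1 (this z hR) y hr
    · intro h
      refine ⟨(ih x).2 fun y hr => h y (Or.inl hr), ?_⟩
      intro χ hχ
      rcases List.mem_ofFn.1 hχ with ⟨i, rfl⟩
      intro z hR
      exact (ih z).2 fun y hr => h y (Or.inr ⟨i, z, hR, hr⟩)

lemma sat_diaLeTail {n : ℕ} {F : Frame (n+1)} {v : ℕ → Set F.W} (k : ℕ) (ψ : MF (n+1)) (x : F.W) :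
    Sat F v x (diaLeTail k ψ) ↔ ∃ y, tailReachLe F k x y ∧ Sat F v y ψ := by
  unfold diaLeTail
  rw [sat_neg, sat_boxLeTail]
  push_neg
  simp only [sat_neg, not_not]

lemma sat_boxLe_of_global {n : ℕ} {F : Frame (n+1)} {v : ℕ → Set F.W} {k : ℕ} {ψ : MF (n+1)}
    (h : ∀ y, Sat F v y ψ) (x : F.W) : Sat F v x (boxLe k ψ) :=
  (sat_boxLe k ψ x).2 fun y _ => h y

end Aux
section ProdAux

variable {n : ℕ}

/-- build a dependent function over `Fin (n+1)` from a head and a tail. -/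
def seq0 {T : Fin (n+1) → Sort*} (a : T 0) (t : ∀ j : Fin n, T j.succ) : ∀ i, T i := fun i =>
  match i with
  | ⟨0, _⟩ => a
  | ⟨j+1, h⟩ => t ⟨j, Nat.lt_of_succ_lt_succ h⟩

lemma tailReachLe_coord0 {Gs : Fin (n+1) → Frame 1} {k : ℕ} {x y : (prodFrame Gs).W}
    (h : tailReachLe (prodFrame Gs) k x y) : x 0 = y 0 := by
  induction k generalizing x with
  | zero => have h' : x = y := h; rw [h']
  | succ k ih =>
    rcases h with h | ⟨i, z, hR, hr⟩
    · exact ih h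
    · exact (hR.2 0 (Ne.symm (Fin.succ_ne_zero i))).trans (ih hr)

lemma reach_proj {Gs : Fin (n+1) → Frame 1} {ℓ : ℕ} {x y : (prodFrame Gs).W}
    (h : reachLe (prodFrame Gs) ℓ x y) :
    ∀ z : (prodFrame Gs).W, z 0 = x 0 → reachLe (prodFrame Gs) ℓ z (Function.update z 0 (y 0)) := by
  induction ℓ generalizing x with
  | zero =>
    have h' : x = y := h
    subst h'
    intro z hz
    have : Function.update z 0 (x 0) = z := by rw [← hz]; exact Function.update_eq_self _ _
    rw [this]
    exact reachLe_refl 0 z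
  | succ ℓ ih =>
    rcases h with h | ⟨i, w, hR, hr⟩
    · intro z hz; exact Or.inl (ih h z hz)
    · intro z hz
      rcases Fin.eq_zero_or_eq_succ i with rfl | ⟨j, rfl⟩
      · refine Or.inr ⟨0, Function.update z 0 (w 0), ⟨?_, ?_⟩, ?_⟩
        · erw [Function.update_self, hz]; exact hR.1
        · intro k hk; erw [Function.update_of_ne hk]
        · have := ih hr (Function.update z 0 (w 0)) (Function.update_self 0 (w 0) z)
          erw [Function.update_idem] at this; exact this
      · have h0 : x 0 = w 0 := hR.2 0 (Ne.symm (Fin.succ_ne_zero j))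
        exact Or.inl (ih hr z (hz.trans h0))

lemma reach_tail_transport {Gs : Fin (n+1) → Frame 1} {ℓ : ℕ} {x y : (prodFrame Gs).W}
    (h : reachLe (prodFrame Gs) ℓ x y) (a : (Gs 0).W) :
    tailReachLe (prodFrame Gs) ℓ (Function.update x 0 a) (Function.update y 0 a) := by
  induction ℓ generalizing x with
  | zero =>
    have h' : x = y := h
    subst h'
    exact tailReachLe_refl 0 _
  | succ ℓ ih =>
    rcases h with h | ⟨i, w, hR, hr⟩
    · exact Or.inl (ih h)
    · rcases Fin.eq_zero_or_eq_succ i with rfl | ⟨j, rfl⟩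
      · have heq : Function.update x 0 a = Function.update w 0 a := by
          funext k
          rcases eq_or_ne k 0 with rfl | hk
          · erw [Function.update_self]
          · erw [Function.update_of_ne hk, Function.update_of_ne hk]
            exact hR.2 k hk
        rw [heq]
        exact Or.inl (ih hr)
      · refine Or.inr ⟨j, Function.update w 0 a, ⟨?_, ?_⟩, ih hr⟩
        · erw [Function.update_of_ne (Fin.succ_ne_zero j),
            Function.update_of_ne (Fin.succ_ne_zero j)]
          exact hR.1
        · intro k hk
          rcases eq_or_ne k 0 with rfl | hk0
          · erw [Function.update_self]
          · erw [Function.update_of_ne hk0, Function.update_of_ne hk0]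
            exact hR.2 k hk

end ProdAux

section ForwardConstruction

variable {n : ℕ} (Gs : Fin (n+1) → Frame 1) (S : Set ((Gs 0).W))

/-- the restriction of the head frame to `S`. -/
def restFrame (s0 : S) : Frame 1 :=
  ⟨↥S, ⟨s0⟩, fun _ a b => (Gs 0).R 0 a.1 b.1⟩

/-- the family of frames with the head restricted to `S`. -/
def restFam (s0 : S) : Fin (n+1) → Frame 1 :=
  seq0 (restFrame Gs S s0) (fun j => Gs j.succ)

/-- map from the restricted product to the original product. -/
def restMap (s0 : S) (y : ∀ i, (restFam Gs S s0 i).W) : ∀ i, (Gs i).W :=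
  seq0 (T := fun i => (Gs i).W) (y 0).1 (fun j => y j.succ)

variable {Gs S}

lemma restMap_R {s0 : S} (i : Fin (n+1)) (y z : ∀ i, (restFam Gs S s0 i).W)
    (h : (prodFrame (restFam Gs S s0)).R i y z) :
    (prodFrame Gs).R i (restMap Gs S s0 y) (restMap Gs S s0 z) := by
  obtain ⟨h1, h2⟩ := h
  rcases Fin.eq_zero_or_eq_succ i with rfl | ⟨j, rfl⟩
  · refine ⟨h1, fun k hk => ?_⟩
    induction k using Fin.cases with
    | zero => exact absurd rfl hk
    | succ l => exact h2 l.succ hk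
  · refine ⟨h1, fun k hk => ?_⟩
    induction k using Fin.cases with
    | zero => exact congrArg Subtype.val (h2 0 hk)
    | succ l => exact h2 l.succ hk

lemma restMap_lift0 {s0 : S} (y : ∀ i, (restFam Gs S s0 i).W) (z' : ∀ i, (Gs i).W)
    (hR : (prodFrame Gs).R 0 (restMap Gs S s0 y) z') (hz : z' 0 ∈ S) :
    ∃ z, (prodFrame (restFam Gs S s0)).R 0 y z ∧ restMap Gs S s0 z = z' := by
  refine ⟨seq0 (T := fun i => (restFam Gs S s0 i).W) ⟨z' 0, hz⟩ (fun j => y j.succ),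
    ⟨hR.1, fun k hk => ?_⟩, ?_⟩
  · induction k using Fin.cases with
    | zero => exact absurd rfl hk
    | succ l => rfl
  · funext i
    induction i using Fin.cases with
    | zero => rfl
    | succ j => exact hR.2 j.succ (Fin.succ_ne_zero j)

lemma restMap_lift_succ {s0 : S} (y : ∀ i, (restFam Gs S s0 i).W) (z' : ∀ i, (Gs i).W)
    (j : Fin n) (hR : (prodFrame Gs).R j.succ (restMap Gs S s0 y) z') :
    ∃ z, (prodFrame (restFam Gs S s0)).R j.succ y z ∧ restMap Gs S s0 z = z' := by
  refine ⟨seq0 (T := fun i => (restFam Gs S s0 i).W) (y 0) (fun l => z' l.succ),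
    ⟨hR.1, fun k hk => ?_⟩, ?_⟩
  · induction k using Fin.cases with
    | zero => rfl
    | succ l => exact hR.2 l.succ hk
  · funext i
    induction i using Fin.cases with
    | zero => exact hR.2 0 (Ne.symm (Fin.succ_ne_zero j))
    | succ l => rfl

end ForwardConstruction
section ForwardDirection

variable {n : ℕ}

lemma forward_TL {m : ℕ} {Gs : Fin (n+1) → Frame 1} {v : ℕ → Set ((prodFrame Gs).W)}
    {x : (prodFrame Gs).W} {d : ℕ} {S : Set ((Gs 0).W)} {s0 : S}
    (hclaim : ∀ ℓ, ℓ ≤ d → ∀ y, reachLe (prodFrame Gs) ℓ x y →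
      (Sat (prodFrame Gs) v y (Bf m) ↔ y 0 ∈ S)) :
    ∀ ψ : MF (n+1), ∀ ℓ, ℓ + ψ.md ≤ d → ∀ y : (∀ i, (restFam Gs S s0 i).W),
      reachLe (prodFrame Gs) ℓ x (restMap Gs S s0 y) →
      (Sat (prodFrame (restFam Gs S s0))
          (fun q => {z | Sat (prodFrame Gs) v (restMap Gs S s0 z) (betaF q)}) y ψ
        ↔ Sat (prodFrame Gs) v (restMap Gs S s0 y) (sigmaT m ψ)) := by
  intro ψ
  induction ψ with
  | var q => intro ℓ hℓ y hy; exact Iff.rfl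
  | bot => intro ℓ hℓ y hy; exact Iff.rfl
  | and a b iha ihb =>
    intro ℓ hℓ y hy
    have hma : ℓ + a.md ≤ d := by
      refine le_trans ?_ hℓ
      exact Nat.add_le_add_left (le_max_left _ _) ℓ
    have hmb : ℓ + b.md ≤ d := by
      refine le_trans ?_ hℓ
      exact Nat.add_le_add_left (le_max_right _ _) ℓ
    exact and_congr (iha ℓ hma y hy) (ihb ℓ hmb y hy)
  | or a b iha ihb =>
    intro ℓ hℓ y hy
    have hma : ℓ + a.md ≤ d := by
      refine le_trans ?_ hℓ
      exact Nat.add_le_add_left (le_max_left _ _) ℓ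
    have hmb : ℓ + b.md ≤ d := by
      refine le_trans ?_ hℓ
      exact Nat.add_le_add_left (le_max_right _ _) ℓ
    exact or_congr (iha ℓ hma y hy) (ihb ℓ hmb y hy)
  | imp a b iha ihb =>
    intro ℓ hℓ y hy
    have hma : ℓ + a.md ≤ d := by
      refine le_trans ?_ hℓ
      exact Nat.add_le_add_left (le_max_left _ _) ℓ
    have hmb : ℓ + b.md ≤ d := by
      refine le_trans ?_ hℓ
      exact Nat.add_le_add_left (le_max_right _ _) ℓ
    exact imp_congr (iha ℓ hma y hy) (ihb ℓ hmb y hy)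
  | box i a ih =>
    intro ℓ hℓ y hy
    have hmd : ℓ + (a.md + 1) ≤ d := hℓ
    have hd1 : ℓ + 1 ≤ d := by omega
    have hda : (ℓ + 1) + a.md ≤ d := by omega
    constructor
    · intro h z' hR hBz'
      have hreach : reachLe (prodFrame Gs) (ℓ+1) x z' := reachLe_snoc hy hR
      have hzS : z' 0 ∈ S := (hclaim (ℓ+1) hd1 z' hreach).1 hBz'
      rcases Fin.eq_zero_or_eq_succ i with rfl | ⟨j, rfl⟩
      · obtain ⟨z, hRz, hmap⟩ := restMap_lift0 y z' hR hzS
        have := (ih (ℓ+1) hda z (by rw [hmap]; exact hreach)).1 (h z hRz)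
        rwa [hmap] at this
      · obtain ⟨z, hRz, hmap⟩ := restMap_lift_succ y z' j hR
        have := (ih (ℓ+1) hda z (by rw [hmap]; exact hreach)).1 (h z hRz)
        rwa [hmap] at this
    · intro h z hRz
      have hR : (prodFrame Gs).R i (restMap Gs S s0 y) (restMap Gs S s0 z) :=
        restMap_R i y z hRz
      have hreach : reachLe (prodFrame Gs) (ℓ+1) x (restMap Gs S s0 z) :=
        reachLe_snoc hy hR
      have hBz : Sat (prodFrame Gs) v (restMap Gs S s0 z) (Bf m) :=
        (hclaim (ℓ+1) hd1 _ hreach).2 (z 0).2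
      exact (ih (ℓ+1) hda z hreach).2 (h _ hR hBz)

lemma forward_dir (m : ℕ) (Cs : Fin (n+1) → Set (MF 1)) (hCs0 : Cs 0 = logicT)
    (φ : MF (n+1))
    (hφ : ∀ Gs : Fin (n+1) → Frame 1, (∀ i, ValidSet (Gs i) (Cs i)) →
      Valid (prodFrame Gs) φ) :
    ∀ Gs : Fin (n+1) → Frame 1, (∀ i, ValidSet (Gs i) (Cs i)) →
      Valid (prodFrame Gs) (MF.imp (Af m φ) (sigmaT m φ)) := by
  intro Gs hGs v x hA
  have hrefl : ReflexiveFrame (Gs 0) := by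
    have := hGs 0
    rw [hCs0] at this
    exact refl_of_validT this
  obtain ⟨hB, h2, h3⟩ : Sat (prodFrame Gs) v x (Bf m) ∧
      Sat (prodFrame Gs) v x (boxLe φ.md (.imp (Bf m) (boxLeTail φ.md (Bf m)))) ∧
      Sat (prodFrame Gs) v x (boxLe φ.md (.imp (diaLeTail φ.md (Bf m)) (Bf m))) := hA
  set d := φ.md with hd
  set S : Set ((Gs 0).W) := {a | Sat (prodFrame Gs) v (Function.update x 0 a) (Bf m)} with hS
  have hxS : x 0 ∈ S := by
    show Sat (prodFrame Gs) v (Function.update x 0 (x 0)) (Bf m)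
    rwa [show Function.update x 0 (x 0) = x from Function.update_eq_self _ _]
  have hclaim : ∀ ℓ, ℓ ≤ d → ∀ y, reachLe (prodFrame Gs) ℓ x y →
      (Sat (prodFrame Gs) v y (Bf m) ↔ y 0 ∈ S) := by
    intro ℓ hℓ y hy
    have hproj : reachLe (prodFrame Gs) d x (Function.update x 0 (y 0)) :=
      reachLe_mono hℓ (reach_proj hy x rfl)
    have htail : tailReachLe (prodFrame Gs) d (Function.update x 0 (y 0)) y := by
      have := reach_tail_transport hy (y 0)
      rw [show Function.update y 0 (y 0) = y from Function.update_eq_self _ _] at this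
      exact tailReachLe_mono hℓ this
    constructor
    · intro hBy
      have := (sat_boxLe d _ x).1 h3 _ hproj
      exact this ((sat_diaLeTail d _ _).2 ⟨y, htail, hBy⟩)
    · intro hyS
      have := (sat_boxLe d _ x).1 h2 _ hproj
      exact (sat_boxLeTail d _ _).1 (this hyS) y htail
  -- the restricted product frame
  set s0 : S := ⟨x 0, hxS⟩ with hs0
  have hGs' : ∀ i, ValidSet (restFam Gs S s0 i) (Cs i) := by
    intro i
    induction i using Fin.cases with
    | zero =>
      rw [hCs0]
      exact validT_of_refl (fun a => hrefl a.1)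
    | succ j => exact hGs j.succ
  set y0 : ∀ i, (restFam Gs S s0 i).W :=
    seq0 (T := fun i => (restFam Gs S s0 i).W) s0 (fun j => x j.succ) with hy0
  have hmap0 : restMap Gs S s0 y0 = x := by
    funext i
    induction i using Fin.cases with
    | zero => rfl
    | succ j => rfl
  have hsat : Sat (prodFrame (restFam Gs S s0))
      (fun q => {z | Sat (prodFrame Gs) v (restMap Gs S s0 z) (betaF q)}) y0 φ :=
    hφ (restFam Gs S s0) hGs' _ y0
  have := (forward_TL hclaim φ 0 (by omega) y0 (by rw [hmap0]; exact reachLe_refl 0 x)).1 hsat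
  rwa [hmap0] at this

end ForwardDirection
section BackwardConstruction

variable {n : ℕ}

/-- the spine relation on the extended head frame. -/
def spR (m : ℕ) (Gs : Fin (n+1) → Frame 1) :
    ((Gs 0).W ⊕ ((Gs 0).W × ℕ × ℕ)) → ((Gs 0).W ⊕ ((Gs 0).W × ℕ × ℕ)) → Prop
  | Sum.inl a, Sum.inl b => (Gs 0).R 0 a b
  | Sum.inl a, Sum.inr (y, k, j) => y = a ∧ 1 ≤ k ∧ k ≤ m+1 ∧ j = 2*k
  | Sum.inr (y, k, j), Sum.inr (y', k', j') =>
      (y = y' ∧ k = k' ∧ j = j') ∨ (y = y' ∧ k = k' ∧ j = j'+1 ∧ j ≤ 2*k)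
  | Sum.inr _, Sum.inl _ => False

/-- the extended head frame. -/
def spFrame (m : ℕ) (Gs : Fin (n+1) → Frame 1) : Frame 1 :=
  ⟨(Gs 0).W ⊕ ((Gs 0).W × ℕ × ℕ), ⟨Sum.inl (Gs 0).nonempty.some⟩, fun _ => spR m Gs⟩

/-- the family with the extended head frame. -/
def spFam (m : ℕ) (Gs : Fin (n+1) → Frame 1) : Fin (n+1) → Frame 1 :=
  seq0 (spFrame m Gs) (fun j => Gs j.succ)

/-- embedding of the original product into the extended product. -/
def spMap (m : ℕ) (Gs : Fin (n+1) → Frame 1) (y : ∀ i, (Gs i).W) : ∀ i, (spFam m Gs i).W :=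
  seq0 (T := fun i => (spFam m Gs i).W) (Sum.inl (y 0)) (fun j => y j.succ)

/-- retraction to the original product, given a head coordinate. -/
def spRetr (m : ℕ) (Gs : Fin (n+1) → Frame 1) (w : ∀ i, (spFam m Gs i).W) (a : (Gs 0).W) :
    ∀ i, (Gs i).W :=
  seq0 (T := fun i => (Gs i).W) a (fun j => w j.succ)

/-- replace the head coordinate of a point of the extended product. -/
def spSet0 (m : ℕ) (Gs : Fin (n+1) → Frame 1) (w : ∀ i, (spFam m Gs i).W)
    (c : (spFrame m Gs).W) : ∀ i, (spFam m Gs i).W :=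
  seq0 (T := fun i => (spFam m Gs i).W) c (fun j => w j.succ)

/-- whether the chain `k` attached to `y` is active at the tail of `w`. -/
def act (m : ℕ) (Gs : Fin (n+1) → Frame 1) (u : ℕ → Set (∀ i, (Gs i).W))
    (w : ∀ i, (spFam m Gs i).W) (y : (Gs 0).W) (k : ℕ) : Prop :=
  k = m+1 ∨ (k ≤ m ∧ spRetr m Gs w y ∈ u k)

/-- the valuation on the extended product. -/
def spVal (m : ℕ) (Gs : Fin (n+1) → Frame 1) (u : ℕ → Set (∀ i, (Gs i).W)) :
    ℕ → Set (∀ i, (spFam m Gs i).W) :=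
  fun q => if q = 0 then
    {w | ∃ y k j, w 0 = Sum.inr (y, k, j) ∧ j % 2 = 0 ∧ j ≤ 2*k ∧ 1 ≤ k ∧ act m Gs u w y k}
  else ∅

variable {m : ℕ} {Gs : Fin (n+1) → Frame 1} {u : ℕ → Set (∀ i, (Gs i).W)}

@[simp] lemma spSet0_zero {w : ∀ i, (spFam m Gs i).W} {c : (spFrame m Gs).W} :
    spSet0 m Gs w c 0 = c := rfl

@[simp] lemma spSet0_spSet0 {w : ∀ i, (spFam m Gs i).W} {c c' : (spFrame m Gs).W} :
    spSet0 m Gs (spSet0 m Gs w c) c' = spSet0 m Gs w c' := by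
  funext i
  induction i using Fin.cases with
  | zero => rfl
  | succ j => rfl

lemma spSet0_self {w : ∀ i, (spFam m Gs i).W} : spSet0 m Gs w (w 0) = w := by
  funext i
  induction i using Fin.cases with
  | zero => rfl
  | succ j => rfl

lemma spRetr_spSet0 {w : ∀ i, (spFam m Gs i).W} {c : (spFrame m Gs).W} {a : (Gs 0).W} :
    spRetr m Gs (spSet0 m Gs w c) a = spRetr m Gs w a := by
  funext i
  induction i using Fin.cases with
  | zero => rfl
  | succ j => rfl

lemma spRetr_spMap {y : ∀ i, (Gs i).W} : spRetr m Gs (spMap m Gs y) (y 0) = y := by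
  funext i
  induction i using Fin.cases with
  | zero => rfl
  | succ j => rfl

lemma act_spSet0 {w : ∀ i, (spFam m Gs i).W} {c : (spFrame m Gs).W} {y : (Gs 0).W} {k : ℕ} :
    act m Gs u (spSet0 m Gs w c) y k = act m Gs u w y k := by
  unfold act
  rw [spRetr_spSet0]

lemma sat_box0' {v : ℕ → Set ((prodFrame (spFam m Gs)).W)} {w : ∀ i, (spFam m Gs i).W}
    {ψ : MF (n+1)} :
    Sat (prodFrame (spFam m Gs)) v w (MF.box 0 ψ) ↔
      ∀ c, spR m Gs (w 0) c → Sat (prodFrame (spFam m Gs)) v (spSet0 m Gs w c) ψ := by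
  constructor
  · intro h c hc
    refine h (spSet0 m Gs w c) ⟨hc, fun k hk => ?_⟩
    induction k using Fin.cases with
    | zero => exact absurd rfl hk
    | succ l => rfl
  · intro h z hz
    obtain ⟨h1, h2⟩ := hz
    have : z = spSet0 m Gs w (z 0) := by
      funext i
      induction i using Fin.cases with
      | zero => rfl
      | succ l => exact (h2 l.succ (Fin.succ_ne_zero l)).symm
    rw [this]
    exact h (z 0) h1

lemma sat_dia0' {v : ℕ → Set ((prodFrame (spFam m Gs)).W)} {w : ∀ i, (spFam m Gs i).W}
    {ψ : MF (n+1)} :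
    Sat (prodFrame (spFam m Gs)) v w (MF.dia 0 ψ) ↔
      ∃ c, spR m Gs (w 0) c ∧ Sat (prodFrame (spFam m Gs)) v (spSet0 m Gs w c) ψ := by
  unfold MF.dia
  erw [sat_neg, sat_box0']
  push_neg
  exact exists_congr fun c => and_congr_right fun _ => not_not

lemma sat_pv_inr {w : ∀ i, (spFam m Gs i).W} {y : (Gs 0).W} {k j : ℕ} :
    Sat (prodFrame (spFam m Gs)) (spVal m Gs u) (spSet0 m Gs w (Sum.inr (y, k, j))) pv ↔
      (j % 2 = 0 ∧ j ≤ 2*k ∧ 1 ≤ k ∧ act m Gs u w y k) := by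
  show spSet0 m Gs w (Sum.inr (y, k, j)) ∈ spVal m Gs u 0 ↔ _
  simp only [spVal, if_pos rfl, Set.mem_setOf_eq]
  constructor
  · rintro ⟨y', k', j', heq, hmod, hle, hk, hact⟩
    have heq' : (Sum.inr (y, k, j) : (Gs 0).W ⊕ ((Gs 0).W × ℕ × ℕ)) = Sum.inr (y', k', j') := heq
    obtain ⟨rfl, rfl, rfl⟩ : y = y' ∧ k = k' ∧ j = j' := by
      injection heq' with h2
      exact ⟨congrArg Prod.fst h2, congrArg (fun p => p.2.1) h2, congrArg (fun p => p.2.2) h2⟩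
    erw [act_spSet0] at hact
    exact ⟨hmod, hle, hk, hact⟩
  · rintro ⟨hmod, hle, hk, hact⟩
    exact ⟨y, k, j, rfl, hmod, hle, hk, (act_spSet0 (u := u)).symm ▸ hact⟩

lemma sat_pv_inl {w : ∀ i, (spFam m Gs i).W} {a : (Gs 0).W} :
    ¬ Sat (prodFrame (spFam m Gs)) (spVal m Gs u) (spSet0 m Gs w (Sum.inl a)) pv := by
  intro h
  have h' : spSet0 m Gs w (Sum.inl a) ∈ spVal m Gs u 0 := h
  simp only [spVal, if_pos rfl, Set.mem_setOf_eq] at h'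
  obtain ⟨y', k', j', heq, -⟩ := h'
  exact Sum.inl_ne_inr
    (show (Sum.inl a : (Gs 0).W ⊕ ((Gs 0).W × ℕ × ℕ)) = Sum.inr (y', k', j') from heq)

lemma inr_inj {y y' : (Gs 0).W} {k k' j j' : ℕ}
    (h : (Sum.inr (y, k, j) : (Gs 0).W ⊕ ((Gs 0).W × ℕ × ℕ)) = Sum.inr (y', k', j')) :
    y = y' ∧ k = k' ∧ j = j' := by
  injection h with h
  injection h with h1 h
  injection h with h2 h3
  exact ⟨h1, h2, h3⟩

lemma spR_from_inr {y : (Gs 0).W} {k j : ℕ} {c : (spFrame m Gs).W} :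
    spR m Gs (Sum.inr (y, k, j)) c ↔
      (c = Sum.inr (y, k, j) ∨ (1 ≤ j ∧ j ≤ 2*k ∧ c = Sum.inr (y, k, j-1))) := by
  cases c with
  | inl a =>
    show False ↔ _
    simp [spR]
  | inr p =>
    obtain ⟨y', k', j'⟩ := p
    show ((y = y' ∧ k = k' ∧ j = j') ∨ (y = y' ∧ k = k' ∧ j = j'+1 ∧ j ≤ 2*k)) ↔ _
    constructor
    · rintro (⟨rfl, rfl, rfl⟩ | ⟨rfl, rfl, rfl, hle⟩)
      · exact Or.inl rfl
      · refine Or.inr ⟨by omega, hle, ?_⟩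
        rw [Nat.add_sub_cancel]
    · rintro (h | ⟨h1, h2, h3⟩)
      · obtain ⟨rfl, rfl, rfl⟩ := inr_inj h.symm
        exact Or.inl ⟨rfl, rfl, rfl⟩
      · obtain ⟨rfl, rfl, rfl⟩ := inr_inj h3.symm
        exact Or.inr ⟨rfl, rfl, by omega, h2⟩

lemma spR_from_inl {a : (Gs 0).W} {c : (spFrame m Gs).W} :
    spR m Gs (Sum.inl a) c ↔
      ((∃ b, (Gs 0).R 0 a b ∧ c = Sum.inl b) ∨
        (∃ k, 1 ≤ k ∧ k ≤ m+1 ∧ c = Sum.inr (a, k, 2*k))) := by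
  cases c with
  | inl b =>
    show (Gs 0).R 0 a b ↔ _
    constructor
    · intro h; exact Or.inl ⟨b, h, rfl⟩
    · rintro (⟨b', hb', h⟩ | ⟨k, -, -, h⟩)
      · injection h with h
        exact h ▸ hb'
      · exact (Sum.inl_ne_inr h).elim
  | inr p =>
    obtain ⟨y, k, j⟩ := p
    show (y = a ∧ 1 ≤ k ∧ k ≤ m+1 ∧ j = 2*k) ↔ _
    constructor
    · rintro ⟨rfl, hk1, hkm, rfl⟩
      exact Or.inr ⟨k, hk1, hkm, rfl⟩
    · rintro (⟨b, -, h⟩ | ⟨k', hk1, hkm, h⟩)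
      · exact (Sum.inr_ne_inl h).elim
      · obtain ⟨rfl, rfl, rfl⟩ := inr_inj h
        exact ⟨rfl, hk1, hkm, rfl⟩

lemma alphaF_zero : (alphaF 0 : MF (n+1)) = .box 0 pv := rfl

lemma alphaF_succ (c : ℕ) : (alphaF (c+1) : MF (n+1)) = blackDia (alphaF c) :=
  Function.iterate_succ_apply' _ _ _

lemma alpha_active {w : ∀ i, (spFam m Gs i).W} {y : (Gs 0).W} {k : ℕ}
    (hk : 1 ≤ k) (hact : act m Gs u w y k) :
    ∀ c j, j ≤ 2*k →
      (Sat (prodFrame (spFam m Gs)) (spVal m Gs u) (spSet0 m Gs w (Sum.inr (y, k, j)))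
          (alphaF c) ↔
        ((j % 2 = 0 ∧ j = 2*c) ∨ (j % 2 = 1 ∧ j + 1 = 2*c))) := by
  intro c
  induction c with
  | zero =>
    intro j hj
    erw [alphaF_zero, sat_box0']
    show (∀ c' : (spFrame m Gs).W, spR m Gs (Sum.inr (y, k, j)) c' → Sat (prodFrame (spFam m Gs)) (spVal m Gs u) (spSet0 m Gs w c') pv) ↔ _
    constructor
    · intro h
      have hself := sat_pv_inr.1 (h (Sum.inr (y, k, j)) (spR_from_inr.2 (Or.inl rfl)))
      rcases Nat.eq_zero_or_pos j with rfl | hj1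
      · exact Or.inl ⟨rfl, rfl⟩
      · have hprev := sat_pv_inr.1
          (h (Sum.inr (y, k, j-1)) (spR_from_inr.2 (Or.inr ⟨hj1, hj, rfl⟩)))
        have h1 := hself.1
        have h2 := hprev.1
        omega
    · intro h
      have hj0 : j = 0 := by omega
      subst hj0
      intro c' hc'
      rw [spR_from_inr] at hc'
      rcases hc' with rfl | ⟨h1, -, -⟩
      · exact sat_pv_inr.2 ⟨rfl, by omega, hk, hact⟩
      · omega
  | succ c ih =>
    intro j hj
    rw [alphaF_succ]
    unfold blackDia
    erw [sat_dia0']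
    show (∃ c₁ : (spFrame m Gs).W, spR m Gs (Sum.inr (y, k, j)) c₁ ∧
        ¬ Sat (prodFrame (spFam m Gs)) (spVal m Gs u) (spSet0 m Gs w c₁) pv ∧
        Sat (prodFrame (spFam m Gs)) (spVal m Gs u) (spSet0 m Gs w c₁) (MF.dia 0 (.and pv (alphaF c)))) ↔ _
    refine Iff.trans (exists_congr fun c₁ => and_congr_right fun _ => and_congr_right fun _ =>
      sat_dia0' (v := spVal m Gs u) (w := spSet0 m Gs w c₁)) ?_
    show (∃ c₁ : (spFrame m Gs).W, spR m Gs (Sum.inr (y, k, j)) c₁ ∧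
        ¬ Sat (prodFrame (spFam m Gs)) (spVal m Gs u) (spSet0 m Gs w c₁) pv ∧
        ∃ c₂ : (spFrame m Gs).W, spR m Gs c₁ c₂ ∧ Sat (prodFrame (spFam m Gs)) (spVal m Gs u) (spSet0 m Gs w c₂) pv ∧
          Sat (prodFrame (spFam m Gs)) (spVal m Gs u) (spSet0 m Gs w c₂) (alphaF c)) ↔ _
    constructor
    · rintro ⟨c₁, hc₁, hnp, c₂, hc₂, hp2, ha⟩
      rw [spR_from_inr] at hc₁
      have hC : ∃ j₁, c₁ = Sum.inr (y, k, j₁) ∧ j₁ ≤ 2*k ∧ (j₁ = j ∨ (1 ≤ j ∧ j₁ = j - 1)) := by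
        rcases hc₁ with rfl | ⟨h1, h2, rfl⟩
        · exact ⟨j, rfl, hj, Or.inl rfl⟩
        · exact ⟨j-1, rfl, by omega, Or.inr ⟨h1, rfl⟩⟩
      obtain ⟨j₁, rfl, hj₁le, hj₁⟩ := hC
      rw [sat_pv_inr] at hnp
      have hodd : ¬ (j₁ % 2 = 0) := fun hh => hnp ⟨hh, hj₁le, hk, hact⟩
      rw [spR_from_inr] at hc₂
      have hC2 : ∃ j₂, c₂ = Sum.inr (y, k, j₂) ∧ j₂ ≤ 2*k ∧ (j₂ = j₁ ∨ (1 ≤ j₁ ∧ j₂ = j₁ - 1)) := by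
        rcases hc₂ with rfl | ⟨h1, h2, rfl⟩
        · exact ⟨j₁, rfl, hj₁le, Or.inl rfl⟩
        · exact ⟨j₁-1, rfl, by omega, Or.inr ⟨h1, rfl⟩⟩
      obtain ⟨j₂, rfl, hj₂le, hj₂⟩ := hC2
      rw [sat_pv_inr] at hp2
      have hp2' := hp2.1
      rw [ih j₂ hj₂le] at ha
      omega
    · intro h
      have hcases : (j % 2 = 0 ∧ j = 2*c + 2) ∨ (j % 2 = 1 ∧ j = 2*c + 1) := by omega
      rcases hcases with ⟨hp, hj2⟩ | ⟨hp, hj2⟩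
      · refine ⟨Sum.inr (y, k, j - 1), spR_from_inr.2 (Or.inr ⟨by omega, hj, rfl⟩),
          ?_, Sum.inr (y, k, j - 2), ?_,
          sat_pv_inr.2 ⟨by omega, by omega, hk, hact⟩, ?_⟩
        · rw [sat_pv_inr]
          rintro ⟨hh, -⟩
          omega
        · refine spR_from_inr.2 (Or.inr ⟨by omega, by omega, ?_⟩)
          rw [Nat.sub_sub]
        · exact (ih (j - 2) (by omega)).2 (Or.inl ⟨by omega, by omega⟩)
      · refine ⟨Sum.inr (y, k, j), spR_from_inr.2 (Or.inl rfl),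
          ?_, Sum.inr (y, k, j - 1), spR_from_inr.2 (Or.inr ⟨by omega, hj, rfl⟩),
          sat_pv_inr.2 ⟨by omega, by omega, hk, hact⟩, ?_⟩
        · rw [sat_pv_inr]
          rintro ⟨hh, -⟩
          omega
        · exact (ih (j - 1) (by omega)).2 (Or.inl ⟨by omega, by omega⟩)

lemma bad_succ {w : ∀ i, (spFam m Gs i).W} {y : (Gs 0).W} {k j : ℕ} {c' : (spFrame m Gs).W}
    (hbad : ¬(j ≤ 2*k ∧ 1 ≤ k ∧ act m Gs u w y k)) (h : spR m Gs (Sum.inr (y, k, j)) c') :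
    ∃ j', c' = Sum.inr (y, k, j') ∧ ¬(j' ≤ 2*k ∧ 1 ≤ k ∧ act m Gs u w y k) := by
  rw [spR_from_inr] at h
  rcases h with rfl | ⟨h1, h2, rfl⟩
  · exact ⟨j, rfl, hbad⟩
  · refine ⟨j-1, rfl, ?_⟩
    rintro ⟨hle, hk, hact⟩
    exact hbad ⟨h2, hk, hact⟩

lemma B_not_inr {w : ∀ i, (spFam m Gs i).W} {y : (Gs 0).W} {k j : ℕ} :
    ¬ Sat (prodFrame (spFam m Gs)) (spVal m Gs u) (spSet0 m Gs w (Sum.inr (y, k, j))) (Bf m) := by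
  intro hB
  erw [show (Bf m : MF (n+1)) = .and (MF.neg pv) (MF.dia 0 (.and pv (alphaF (m+1)))) from rfl,
    sat_and, sat_neg, sat_dia0'] at hB
  obtain ⟨hnp, c₂, hc₂, hsat⟩ := hB
  change spR m Gs (Sum.inr (y, k, j) : (spFrame m Gs).W) c₂ at hc₂
  change Sat (prodFrame (spFam m Gs)) (spVal m Gs u) (spSet0 m Gs w c₂) pv ∧ Sat (prodFrame (spFam m Gs)) (spVal m Gs u) (spSet0 m Gs w c₂) (alphaF (m+1)) at hsat
  obtain ⟨hp, ha⟩ := hsat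
  by_cases hgood : j ≤ 2*k ∧ 1 ≤ k ∧ act m Gs u w y k
  · obtain ⟨hjle, hk1, hact⟩ := hgood
    have hkm : k ≤ m+1 := by
      rcases hact with h | ⟨h, -⟩ <;> omega
    have hodd : ¬ (j % 2 = 0) := fun hh => hnp (sat_pv_inr.2 ⟨hh, hjle, hk1, hact⟩)
    erw [spR_from_inr] at hc₂
    have hC2 : ∃ j₂, c₂ = Sum.inr (y, k, j₂) ∧ j₂ ≤ 2*k ∧ (j₂ = j ∨ (1 ≤ j ∧ j₂ = j - 1)) := by
      rcases hc₂ with rfl | ⟨h1, h2, rfl⟩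
      · exact ⟨j, rfl, hjle, Or.inl rfl⟩
      · exact ⟨j-1, rfl, by omega, Or.inr ⟨h1, rfl⟩⟩
    obtain ⟨j₂, rfl, hj₂le, hj₂⟩ := hC2
    rw [sat_pv_inr] at hp
    rw [alpha_active hk1 hact (m+1) j₂ hj₂le] at ha
    have hp1 := hp.1
    omega
  · obtain ⟨j₂, rfl, hbad₂⟩ := bad_succ hgood hc₂
    rw [sat_pv_inr] at hp
    exact hbad₂ ⟨hp.2.1, hp.2.2.1, hp.2.2.2⟩

lemma B_at_inl {w : ∀ i, (spFam m Gs i).W} {a : (Gs 0).W} :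
    Sat (prodFrame (spFam m Gs)) (spVal m Gs u) (spSet0 m Gs w (Sum.inl a)) (Bf m) := by
  erw [show (Bf m : MF (n+1)) = .and (MF.neg pv) (MF.dia 0 (.and pv (alphaF (m+1)))) from rfl,
    sat_and, sat_neg, sat_dia0']
  refine ⟨sat_pv_inl, Sum.inr (a, m+1, 2*(m+1)), ?_, ?_⟩
  · erw [spSet0_zero, spR_from_inl]
    exact Or.inr ⟨m+1, by omega, le_rfl, rfl⟩
  · change Sat (prodFrame (spFam m Gs)) (spVal m Gs u) (spSet0 m Gs w (Sum.inr (a, m+1, 2*(m+1)))) pv ∧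
      Sat (prodFrame (spFam m Gs)) (spVal m Gs u) (spSet0 m Gs w (Sum.inr (a, m+1, 2*(m+1)))) (alphaF (m+1))
    refine ⟨sat_pv_inr.2 ⟨by omega, le_rfl, by omega, Or.inl rfl⟩, ?_⟩
    exact (alpha_active (by omega) (Or.inl rfl) (m+1) (2*(m+1)) le_rfl).2 (Or.inl ⟨by omega, rfl⟩)

lemma beta_at_inl {w : ∀ i, (spFam m Gs i).W} {a : (Gs 0).W} {q : ℕ}
    (hq1 : 1 ≤ q) (hqm : q ≤ m) :
    Sat (prodFrame (spFam m Gs)) (spVal m Gs u) (spSet0 m Gs w (Sum.inl a)) (betaF q) ↔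
      spRetr m Gs w a ∈ u q := by
  erw [show (betaF q : MF (n+1)) = .and (MF.neg pv) (MF.dia 0 (.and pv (alphaF q))) from rfl,
    sat_and, sat_neg, sat_dia0']
  show (¬ Sat (prodFrame (spFam m Gs)) (spVal m Gs u) (spSet0 m Gs w (Sum.inl a)) pv ∧ ∃ c₂ : (spFrame m Gs).W, spR m Gs (Sum.inl a) c₂ ∧
      Sat (prodFrame (spFam m Gs)) (spVal m Gs u) (spSet0 m Gs w c₂) pv ∧ Sat (prodFrame (spFam m Gs)) (spVal m Gs u) (spSet0 m Gs w c₂) (alphaF q)) ↔ _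
  constructor
  · rintro ⟨-, c₂, hc₂, hp, ha⟩
    rw [spR_from_inl] at hc₂
    rcases hc₂ with ⟨b, hb, rfl⟩ | ⟨k, hk1, hkm, rfl⟩
    · exact absurd hp sat_pv_inl
    · rw [sat_pv_inr] at hp
      obtain ⟨-, -, hk1', hact⟩ := hp
      rw [alpha_active hk1' hact q (2*k) le_rfl] at ha
      have hkq : k = q := by omega
      subst hkq
      rcases hact with h | ⟨-, h⟩
      · omega
      · exact h
  · intro hmem
    refine ⟨sat_pv_inl, Sum.inr (a, q, 2*q), ?_, ?_, ?_⟩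
    · erw [spR_from_inl]
      exact Or.inr ⟨q, hq1, by omega, rfl⟩
    · exact sat_pv_inr.2 ⟨by omega, le_rfl, hq1, Or.inr ⟨hqm, hmem⟩⟩
    · exact (alpha_active hq1 (Or.inr ⟨hqm, hmem⟩) q (2*q) le_rfl).2 (Or.inl ⟨by omega, rfl⟩)

lemma B_iff_inl {w' : ∀ i, (spFam m Gs i).W} :
    Sat (prodFrame (spFam m Gs)) (spVal m Gs u) w' (Bf m) ↔ ∃ a, w' 0 = Sum.inl a := by
  constructor
  · intro h
    cases hw : w' 0 with
    | inl a => exact ⟨a, rfl⟩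
    | inr p =>
      obtain ⟨y, k, j⟩ := p
      have heq : spSet0 m Gs w' (Sum.inr (y, k, j)) = w' := by rw [← hw]; exact spSet0_self
      rw [← heq] at h
      exact absurd h B_not_inr
  · rintro ⟨a, hw⟩
    have heq : spSet0 m Gs w' (Sum.inl a) = w' := by rw [← hw]; exact spSet0_self
    rw [← heq]
    exact B_at_inl

end BackwardConstruction
section BackwardDirection

variable {n : ℕ} {m : ℕ} {Gs : Fin (n+1) → Frame 1} {u : ℕ → Set (∀ i, (Gs i).W)}

lemma A_holds {w' : ∀ i, (spFam m Gs i).W} (ha : ∃ a, w' 0 = Sum.inl a) (φ : MF (n+1)) :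
    Sat (prodFrame (spFam m Gs)) (spVal m Gs u) w' (Af m φ) := by
  unfold Af
  erw [sat_and, sat_and]
  refine ⟨B_iff_inl.2 ha, ?_, ?_⟩
  · refine sat_boxLe_of_global (F := prodFrame (spFam m Gs)) ?_ w'
    intro z
    erw [sat_imp, sat_boxLeTail]
    intro hBz z' hz'
    obtain ⟨a, hza⟩ := B_iff_inl.1 hBz
    refine B_iff_inl.2 ⟨a, ?_⟩
    rw [← tailReachLe_coord0 hz']
    exact hza
  · refine sat_boxLe_of_global (F := prodFrame (spFam m Gs)) ?_ w'
    intro z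
    erw [sat_imp, sat_diaLeTail]
    rintro ⟨z', hz', hBz'⟩
    obtain ⟨a, hza⟩ := B_iff_inl.1 hBz'
    refine B_iff_inl.2 ⟨a, ?_⟩
    rw [tailReachLe_coord0 hz']
    exact hza

lemma spMap_R {y z : ∀ i, (Gs i).W} (i : Fin (n+1)) (h : (prodFrame Gs).R i y z) :
    (prodFrame (spFam m Gs)).R i (spMap m Gs y) (spMap m Gs z) := by
  rcases Fin.eq_zero_or_eq_succ i with rfl | ⟨j, rfl⟩
  · refine ⟨h.1, fun k hk => ?_⟩
    induction k using Fin.cases with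
    | zero => exact absurd rfl hk
    | succ l => exact h.2 l.succ hk
  · refine ⟨h.1, fun k hk => ?_⟩
    induction k using Fin.cases with
    | zero => exact congrArg Sum.inl (h.2 0 hk)
    | succ l => exact h.2 l.succ hk

lemma spMap_back0 {y : ∀ i, (Gs i).W} {z' : ∀ i, (spFam m Gs i).W}
    (h : (prodFrame (spFam m Gs)).R 0 (spMap m Gs y) z') {b : (Gs 0).W}
    (hz : z' 0 = Sum.inl b) :
    (prodFrame Gs).R 0 y (spRetr m Gs z' b) ∧ spMap m Gs (spRetr m Gs z' b) = z' := by
  constructor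
  · refine ⟨?_, fun k hk => ?_⟩
    · have h1' : spR m Gs (Sum.inl (y 0)) (z' 0) := h.1
      rw [hz] at h1'
      exact h1'
    · induction k using Fin.cases with
      | zero => exact absurd rfl hk
      | succ l => exact h.2 l.succ hk
  · funext i
    induction i using Fin.cases with
    | zero => exact hz.symm
    | succ l => rfl

lemma spMap_back_succ {y : ∀ i, (Gs i).W} {z' : ∀ i, (spFam m Gs i).W} (j : Fin n)
    (h : (prodFrame (spFam m Gs)).R j.succ (spMap m Gs y) z') :
    ∃ z, (prodFrame Gs).R j.succ y z ∧ spMap m Gs z = z' := by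
  have h0 : z' 0 = Sum.inl (y 0) := (h.2 0 (Ne.symm (Fin.succ_ne_zero j))).symm
  refine ⟨spRetr m Gs z' (y 0), ⟨h.1, fun k hk => ?_⟩, ?_⟩
  · induction k using Fin.cases with
    | zero => rfl
    | succ l => exact h.2 l.succ hk
  · funext i
    induction i using Fin.cases with
    | zero => exact h0.symm
    | succ l => rfl

lemma backward_TL :
    ∀ ψ : MF (n+1), (∀ q ∈ ψ.vars, 1 ≤ q ∧ q ≤ m) → ∀ y : ∀ i, (Gs i).W,
      (Sat (prodFrame Gs) u y ψ ↔
        Sat (prodFrame (spFam m Gs)) (spVal m Gs u) (spMap m Gs y) (sigmaT m ψ)) := by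
  intro ψ
  induction ψ with
  | var q =>
    intro hv y
    obtain ⟨hq1, hqm⟩ := hv q rfl
    have heq : spSet0 m Gs (spMap m Gs y) (Sum.inl (y 0)) = spMap m Gs y := spSet0_self
    have hbeta := beta_at_inl (w := spMap m Gs y) (a := y 0) hq1 hqm (u := u)
    rw [heq, spRetr_spMap] at hbeta
    exact hbeta.symm
  | bot => intro _ y; exact Iff.rfl
  | and a b iha ihb =>
    intro hv y
    exact and_congr (iha (fun q hq => hv q (Set.mem_union_left _ hq)) y)
      (ihb (fun q hq => hv q (Set.mem_union_right _ hq)) y)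
  | or a b iha ihb =>
    intro hv y
    exact or_congr (iha (fun q hq => hv q (Set.mem_union_left _ hq)) y)
      (ihb (fun q hq => hv q (Set.mem_union_right _ hq)) y)
  | imp a b iha ihb =>
    intro hv y
    exact imp_congr (iha (fun q hq => hv q (Set.mem_union_left _ hq)) y)
      (ihb (fun q hq => hv q (Set.mem_union_right _ hq)) y)
  | box i a ih =>
    intro hv y
    have hv' : ∀ q ∈ a.vars, 1 ≤ q ∧ q ≤ m := hv
    constructor
    · intro h z' hR hBz'
      obtain ⟨b, hb⟩ := B_iff_inl.1 hBz'
      rcases Fin.eq_zero_or_eq_succ i with rfl | ⟨j, rfl⟩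
      · obtain ⟨hRz, hmap⟩ := spMap_back0 hR hb
        have := (ih hv' (spRetr m Gs z' b)).1 (h _ hRz)
        rwa [hmap] at this
      · obtain ⟨z, hRz, hmap⟩ := spMap_back_succ j hR
        have := (ih hv' z).1 (h z hRz)
        rwa [hmap] at this
    · intro h z hRz
      have hR := spMap_R (m := m) i hRz
      have hB : Sat (prodFrame (spFam m Gs)) (spVal m Gs u) (spMap m Gs z) (Bf m) :=
        B_iff_inl.2 ⟨z 0, rfl⟩
      exact (ih hv' z).2 (h _ hR hB)

lemma backward_dir (m : ℕ) (Cs : Fin (n+1) → Set (MF 1)) (hCs0 : Cs 0 = logicT)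
    (φ : MF (n+1)) (hvars : ∀ q ∈ φ.vars, 1 ≤ q ∧ q ≤ m)
    (hσ : ∀ Gs : Fin (n+1) → Frame 1, (∀ i, ValidSet (Gs i) (Cs i)) →
      Valid (prodFrame Gs) (MF.imp (Af m φ) (sigmaT m φ))) :
    ∀ Gs : Fin (n+1) → Frame 1, (∀ i, ValidSet (Gs i) (Cs i)) →
      Valid (prodFrame Gs) φ := by
  intro Gs hGs u y
  have hrefl : ReflexiveFrame (Gs 0) := by
    have := hGs 0
    rw [hCs0] at this
    exact refl_of_validT this
  have hrefl' : ReflexiveFrame (spFrame m Gs) := by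
    intro w
    cases w with
    | inl a => exact hrefl a
    | inr p =>
      obtain ⟨y', k, j⟩ := p
      exact Or.inl ⟨rfl, rfl, rfl⟩
  have hGs' : ∀ i, ValidSet (spFam m Gs i) (Cs i) := by
    intro i
    induction i using Fin.cases with
    | zero =>
      rw [hCs0]
      exact validT_of_refl hrefl'
    | succ j => exact hGs j.succ
  have hsat := hσ (spFam m Gs) hGs' (spVal m Gs u) (spMap m Gs y)
  have hA : Sat (prodFrame (spFam m Gs)) (spVal m Gs u) (spMap m Gs y) (Af m φ) :=
    A_holds ⟨y 0, rfl⟩ φ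
  exact (backward_TL φ hvars y).2 (hsat hA)

end BackwardDirection
end ModalProducts

open ModalProducts

/-- **Lemma 3.1.** Let `n ≥ 1`, let `L₂, …, Lₙ` be Kripke complete monomodal logics
(here `Ls i` for `i : Fin n`), and let `L = T × L₂ × … × Lₙ`.  For an `(n+1)`-modal
formula `φ` whose variables are among `p₁, …, p_m`, with `A` and `σ` defined from `φ`:
`φ ∈ L` iff `A → σ(φ) ∈ L`. -/
theorem products_with_T_lemma_3_1 (n m : ℕ) (Ls : Fin n → Set (MF 1))
    (hLs : ∀ i, KripkeComplete (Ls i))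
    (L : Set (MF (n+1)))
    (hL : L = productLogic (Fin.cases (motive := fun _ => Set (MF 1)) logicT Ls))
    (φ : MF (n+1)) (hvars : ∀ q ∈ φ.vars, 1 ≤ q ∧ q ≤ m) :
    φ ∈ L ↔ MF.imp (Af m φ) (sigmaT m φ) ∈ L := by
  subst hL
  set Cs : Fin (n+1) → Set (MF 1) := Fin.cases (motive := fun _ => Set (MF 1)) logicT Ls
    with hCs
  have hCs0 : Cs 0 = logicT := rfl
  have hmem : ∀ χ : MF (n+1), χ ∈ productLogic Cs ↔
      ∀ Gs : Fin (n+1) → Frame 1, (∀ i, ValidSet (Gs i) (Cs i)) → Valid (prodFrame Gs) χ := by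
    intro χ
    constructor
    · intro h Gs hGs
      exact h (prodFrame Gs) ⟨Gs, hGs, rfl⟩
    · rintro h F ⟨Gs, hGs, rfl⟩
      exact h Gs hGs
  rw [hmem φ, hmem (MF.imp (Af m φ) (sigmaT m φ))]
  constructor
  · intro h
    exact forward_dir m Cs hCs0 φ h
  · intro h
    exact backward_dir m Cs hCs0 φ hvars h
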